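/- Let Γ be a connected finite simple graph and let v_i, v_j be vertices with d(v_i, v_j) ≥ 3. Let K be a connected component of Γ \ S_i and Q a connected component of Γ \ S_j. If v_i ∈ Q and v_j ∈ K, then K ∪ Q contains every vertex of Γ. -/

import Mathlib

def gstar {V : Type*} (G : SimpleGraph V) (v : V) : Set V := {u | u = v ∨ G.Adj v u}

def IsCompOf {V : Type*} (G : SimpleGraph V) (s K : Set V) : Prop :=
  K.Nonempty ∧ K ⊆ s ∧ (G.induce K).Connected ∧
    ∀ K' : Set V, K ⊆ K' → K' ⊆ s → (G.induce K').Connected → K' = K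

lemma induce_singleton_connected {V : Type*} (G : SimpleGraph V) (v : V) :
    (G.induce {v}).Connected := by
  have : Nonempty ({v} : Set V) := ⟨⟨v, rfl⟩⟩
  constructor
  intro a b
  have : a = b := Subtype.ext (by rw [a.2, b.2])
  exact this ▸ SimpleGraph.Reachable.refl a

lemma mem_comp_of_adj {V : Type*} {G : SimpleGraph V} {s K : Set V}
    (hK : IsCompOf G s K) {u v : V} (hu : u ∈ K) (h : G.Adj u v) (hv : v ∈ s) :
    v ∈ K := by
  obtain ⟨hne, hsub, hc, hmax⟩ := hK
  have hconn' : (G.induce (K ∪ {v})).Connected :=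
    SimpleGraph.connected_induce_union hc.preconnected (induce_singleton_connected G v).preconnected hu rfl h
  have := hmax (K ∪ {v}) Set.subset_union_left
    (Set.union_subset hsub (by simpa using hv)) hconn'
  rw [← this]; exact Or.inr rfl

lemma gstar_dist_le {V : Type*} {G : SimpleGraph V} {i u : V} (h : u ∈ gstar G i) :
    G.dist i u ≤ 1 := by
  rcases h with h | h
  · subst h; rw [SimpleGraph.dist_self]; exact zero_le_one
  · rw [SimpleGraph.dist_eq_one_iff_adj.2 h]

theorem stmt3 {V : Type*} [Fintype V] (G : SimpleGraph V) (hconn : G.Connected)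
    (i j : V) (hd : 3 ≤ G.dist i j)
    (K Q : Set V)
    (hK : IsCompOf G ((gstar G i)ᶜ) K) (hQ : IsCompOf G ((gstar G j)ᶜ) Q)
    (hiQ : i ∈ Q) (hjK : j ∈ K) :
    ∀ v : V, v ∈ K ∪ Q := by
  -- the two stars are disjoint
  have hdisj : ∀ u : V, u ∈ gstar G i → u ∉ gstar G j := by
    intro u hui huj
    have h1 := gstar_dist_le hui
    have h2 := gstar_dist_le huj
    have := hconn.dist_triangle (u := i) (v := u) (w := j)
    rw [SimpleGraph.dist_comm] at h2
    omega
  -- gstar i ⊆ Q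
  have hgiQ : ∀ u : V, u ∈ gstar G i → u ∈ Q := by
    intro u hu
    rcases hu with h | h
    · subst h; exact hiQ
    · exact mem_comp_of_adj hQ hiQ h (hdisj u (Or.inr h))
  have hgjK : ∀ u : V, u ∈ gstar G j → u ∈ K := by
    intro u hu
    rcases hu with h | h
    · subst h; exact hjK
    · exact mem_comp_of_adj hK hjK h (fun hc => hdisj u hc (Or.inr h))
  intro v
  have hreach : Relation.ReflTransGen G.Adj i v := by
    have h := hconn.preconnected i v
    rwa [SimpleGraph.reachable_iff_reflTransGen] at h
  induction hreach with
  | refl => exact Or.inr hiQ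
  | tail _ hadj ih =>
    rename_i b c _
    by_cases hci : c ∈ gstar G i
    · exact Or.inr (hgiQ c hci)
    by_cases hcj : c ∈ gstar G j
    · exact Or.inl (hgjK c hcj)
    rcases ih with hb | hb
    · exact Or.inl (mem_comp_of_adj hK hb hadj hci)
    · exact Or.inr (mem_comp_of_adj hQ hb hadj hcj)
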